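/- Let η : ℝ → ℝ be continuous, k ∈ ℝ³ a unit vector, q(x) := η(x·k), ξ(t) := ∫₀ᵗ η(τ)dτ, and φ₀ ∈ ℂ⁴ a unit vector with (α·k)φ₀ = φ₀. Then for every λ ∈ ℝ the function f(x) = exp(-i(α·k)ξ(x·k)) exp(iλ x·k) φ₀ is C¹, satisfies |f(x)| = 1 for all x, and solves (-i α·∇ + q) f = λ f pointwise on ℝ³. -/

import Mathlib

open Matrix Complex MeasureTheory Filter
open scoped RealInnerProductSpace Matrix.Norms.L2Operator

noncomputable section

abbrev R3 := EuclideanSpace ℝ (Fin 3)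
abbrev C4 := EuclideanSpace ℂ (Fin 4)

/-- The Pauli matrices σ₁, σ₂, σ₃. -/
def pauli : Fin 3 → Matrix (Fin 2) (Fin 2) ℂ :=
  ![!![0, 1; 1, 0], !![0, -I; I, 0], !![1, 0; 0, -1]]

/-- The standard 4×4 Dirac alpha matrices αⱼ = [[0,σⱼ],[σⱼ,0]]. -/
def diracAlpha (j : Fin 3) : Matrix (Fin 4) (Fin 4) ℂ :=
  Matrix.reindex finSumFinEquiv finSumFinEquiv
    (Matrix.fromBlocks 0 (pauli j) (pauli j) 0)

/-- α·v = v₁α₁ + v₂α₂ + v₃α₃. -/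
def alphaDot (v : EuclideanSpace ℝ (Fin 3)) : Matrix (Fin 4) (Fin 4) ℂ :=
  ∑ j, (v j : ℂ) • diracAlpha j

/-- Matrix acting on a Euclidean (ℓ²) vector. -/
def mulVecE {n : ℕ} (M : Matrix (Fin n) (Fin n) ℂ) (v : EuclideanSpace ℂ (Fin n)) :
    EuclideanSpace ℂ (Fin n) :=
  (WithLp.equiv 2 _).symm (M.mulVec ((WithLp.equiv 2 _) v))

/-- The massless Dirac operator (-i α·∇ f)(x), defined pointwise. -/
def diracOp (f : R3 → C4) (x : R3) : C4 :=
  (-I) • ∑ j, mulVecE (diracAlpha j) (fderiv ℝ f x (EuclideanSpace.single j 1))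

section Aux

set_option maxHeartbeats 1000000

lemma mulVecE_add_left {n : ℕ} (A B : Matrix (Fin n) (Fin n) ℂ) (v : EuclideanSpace ℂ (Fin n)) :
    mulVecE (A + B) v = mulVecE A v + mulVecE B v := by
  simp [mulVecE, Matrix.add_mulVec]

lemma mulVecE_smul_left {n : ℕ} (a : ℂ) (A : Matrix (Fin n) (Fin n) ℂ)
    (v : EuclideanSpace ℂ (Fin n)) : mulVecE (a • A) v = a • mulVecE A v := by
  simp [mulVecE, Matrix.smul_mulVec]

lemma mulVecE_smul_right {n : ℕ} (a : ℂ) (A : Matrix (Fin n) (Fin n) ℂ)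
    (v : EuclideanSpace ℂ (Fin n)) : mulVecE A (a • v) = a • mulVecE A v := by
  simp [mulVecE, Matrix.mulVec_smul]

lemma mulVecE_real_smul_right {n : ℕ} (a : ℝ) (A : Matrix (Fin n) (Fin n) ℂ)
    (v : EuclideanSpace ℂ (Fin n)) : mulVecE A (a • v) = a • mulVecE A v := by
  simp [mulVecE, Matrix.mulVec_smul]

lemma mulVecE_sum_left {n : ℕ} {ι : Type*} (s : Finset ι) (A : ι → Matrix (Fin n) (Fin n) ℂ)
    (v : EuclideanSpace ℂ (Fin n)) : mulVecE (∑ j ∈ s, A j) v = ∑ j ∈ s, mulVecE (A j) v := by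
  classical
  induction s using Finset.induction with
  | empty => simp [mulVecE]
  | insert _ _ hj ih => rw [Finset.sum_insert hj, Finset.sum_insert hj, mulVecE_add_left, ih]

lemma exp_mulVecE_eigen {n : ℕ} (M : Matrix (Fin n) (Fin n) ℂ) (c : ℂ)
    (v : EuclideanSpace ℂ (Fin n)) (h : mulVecE M v = c • v) :
    mulVecE (NormedSpace.exp M) v = Complex.exp c • v := by
  have hpow : ∀ m : ℕ, mulVecE (M ^ m) v = c ^ m • v := by
    intro m; induction m with
    | zero => simp [mulVecE]
    | succ m ih =>
      have : mulVecE (M ^ (m + 1)) v = mulVecE M (mulVecE (M ^ m) v) := by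
        simp [mulVecE, pow_succ', ← Matrix.mulVec_mulVec]
      rw [this, ih, mulVecE_smul_right, h, smul_smul, pow_succ, mul_comm]
  let L : Matrix (Fin n) (Fin n) ℂ →ₗ[ℂ] EuclideanSpace ℂ (Fin n) :=
    { toFun := fun A => mulVecE A v
      map_add' := fun A B => mulVecE_add_left A B v
      map_smul' := fun a A => mulVecE_smul_left a A v }
  have hLc : Continuous L := by
    refine AddMonoidHomClass.continuous_of_bound L ‖v‖ fun A => ?_
    have h1 := Matrix.l2_opNorm_mulVec A v
    rw [mul_comm]
    exact h1
  have hs : HasSum (fun m : ℕ => (m.factorial⁻¹ : ℂ) • M ^ m) (NormedSpace.exp M) :=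
    NormedSpace.exp_series_hasSum_exp' (𝕂 := ℂ) M
  have h2 : HasSum (fun m : ℕ => L ((m.factorial⁻¹ : ℂ) • M ^ m)) (L (NormedSpace.exp M)) :=
    hs.map L.toAddMonoidHom hLc
  have h3 : HasSum (fun m : ℕ => ((m.factorial⁻¹ : ℂ) * c ^ m) • v) (Complex.exp c • v) := by
    have := (NormedSpace.exp_series_hasSum_exp' (𝕂 := ℂ) c).smul_const v
    simpa [smul_smul, Complex.exp_eq_exp_ℂ] using this
  have h4 : (fun m : ℕ => L ((m.factorial⁻¹ : ℂ) • M ^ m))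
      = fun m : ℕ => ((m.factorial⁻¹ : ℂ) * c ^ m) • v := by
    funext m
    show mulVecE ((m.factorial⁻¹ : ℂ) • M ^ m) v = _
    rw [mulVecE_smul_left, hpow, smul_smul]
  rw [h4] at h2
  exact h2.unique h3

end Aux

/-- Bounded generalized eigenfunctions for the massless Dirac operator with potential
q(x) = η(x·k): the plane-wave ansatz f(x) = exp(-i(α·k)ξ(x·k)) e^{iλx·k} φ₀ is C¹, has
pointwise norm one, and satisfies (-iα·∇ + q)f = λf on ℝ³. -/
theorem stmt6 (η : ℝ → ℝ) (hη : Continuous η) (k : R3) (hk : ‖k‖ = 1)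
    (q : R3 → ℝ) (hq : ∀ x, q x = η ⟪x, k⟫)
    (ξ : ℝ → ℝ) (hξ : ∀ t, ξ t = ∫ τ in (0:ℝ)..t, η τ)
    (φ₀ : C4) (hφ : ‖φ₀‖ = 1) (hφk : mulVecE (alphaDot k) φ₀ = φ₀)
    (lam : ℝ) (f : R3 → C4)
    (hf : ∀ x, f x = mulVecE (NormedSpace.exp ((-(I * (ξ ⟪x, k⟫ : ℝ))) • alphaDot k))
        (Complex.exp (I * lam * (⟪x, k⟫ : ℝ)) • φ₀)) :
    ContDiff ℝ 1 f ∧ (∀ x, ‖f x‖ = 1) ∧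
      ∀ x, diracOp f x + (q x : ℂ) • f x = (lam : ℂ) • f x := by
  classical
  have hℓ : ∀ x : R3, (⟪x, k⟫ : ℝ) = (innerSL ℝ k) x := fun x => (real_inner_comm x k).symm
  set ℓ : R3 →L[ℝ] ℝ := innerSL ℝ k with hℓdef
  -- derivative of ξ
  have hξd : ∀ t : ℝ, HasDerivAt ξ (η t) t := by
    intro t
    have h1 := (hη.integral_hasStrictDerivAt 0 t).hasDerivAt
    have he : ξ = fun u => ∫ τ in (0:ℝ)..u, η τ := funext hξ
    rw [he]; exact h1
  have hξc : Continuous ξ := by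
    have : Differentiable ℝ ξ := fun t => (hξd t).differentiableAt
    exact this.continuous
  -- the scalar profile function and its derivative
  set g : ℝ → ℂ := fun t => Complex.exp (I * lam * t - I * ξ t) with hgdef
  set g' : ℝ → ℂ := fun t => (I * lam - I * η t) * g t with hg'def
  have hgd : ∀ t : ℝ, HasDerivAt g (g' t) t := by
    intro t
    have h1 : HasDerivAt (fun u : ℝ => I * lam * (u : ℂ)) (I * lam) t := by
      simpa using (Complex.ofRealCLM.hasDerivAt (x := t)).const_mul (I * (lam : ℂ))
    have h2 : HasDerivAt (fun u : ℝ => I * (ξ u : ℂ)) (I * (η t : ℂ)) t :=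
      ((hξd t).ofReal_comp).const_mul I
    have h3 := (h1.sub h2).cexp
    rw [hg'def, hgdef]
    simpa [mul_comm] using h3
  have hgc : Continuous g := by
    rw [hgdef]
    exact Complex.continuous_exp.comp
      (((continuous_const.mul Complex.continuous_ofReal)).sub
        (continuous_const.mul (Complex.continuous_ofReal.comp hξc)))
  have hg'c : Continuous g' := by
    rw [hg'def]
    exact ((continuous_const.sub
      (continuous_const.mul (Complex.continuous_ofReal.comp hη)))).mul hgc
  have hgn : ∀ t, ‖g t‖ = 1 := by
    intro t
    rw [hgdef]
    simp [Complex.norm_exp]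
  -- the representation f x = g (ℓ x) • φ₀
  have hfx : ∀ x : R3, f x = g (ℓ x) • φ₀ := by
    intro x
    rw [hf x, mulVecE_smul_right]
    have he : mulVecE ((-(I * (ξ ⟪x, k⟫ : ℝ))) • alphaDot k) φ₀
        = (-(I * (ξ ⟪x, k⟫ : ℝ))) • φ₀ := by
      rw [mulVecE_smul_left, hφk]
    rw [exp_mulVecE_eigen _ _ _ he, smul_smul, ← Complex.exp_add, hgdef, ← hℓ x]
    ring_nf
  -- the derivative of f
  have hFd : ∀ x : R3, HasFDerivAt f
      (((1 : ℝ →L[ℝ] ℝ).smulRight (g' (ℓ x) • φ₀)).comp ℓ) x := by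
    intro x
    have hS : HasDerivAt (fun t : ℝ => g t • φ₀) (g' (ℓ x) • φ₀) (ℓ x) :=
      (hgd (ℓ x)).smul_const φ₀
    have hcomp := hS.hasFDerivAt.comp x ℓ.hasFDerivAt
    have hfe : f = (fun t : ℝ => g t • φ₀) ∘ ℓ := funext fun y => hfx y
    rw [hfe]; exact hcomp
  have hdiff : Differentiable ℝ f := fun x => (hFd x).differentiableAt
  have hfderiv : (fderiv ℝ f) = fun x : R3 =>
      ((1 : ℝ →L[ℝ] ℝ).smulRight (g' (ℓ x) • φ₀)).comp ℓ := funext fun x => (hFd x).fderiv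
  refine ⟨?_, ?_, ?_⟩
  · -- C¹
    rw [contDiff_one_iff_fderiv]
    refine ⟨hdiff, ?_⟩
    rw [hfderiv]
    have hw : Continuous fun x : R3 => g' (ℓ x) • φ₀ :=
      (hg'c.comp ℓ.continuous).smul continuous_const
    have h1 : Continuous fun x : R3 => (1 : ℝ →L[ℝ] ℝ).smulRight (g' (ℓ x) • φ₀) :=
      ((ContinuousLinearMap.smulRightL ℝ ℝ C4 (1 : ℝ →L[ℝ] ℝ)).continuous).comp hw
    exact h1.clm_comp continuous_const
  · -- norm one
    intro x
    rw [hfx x, norm_smul, hgn, hφ, one_mul]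
  · -- the eigenvalue equation
    intro x
    have hsingle : ∀ j : Fin 3, ℓ (EuclideanSpace.single j 1) = k j := by
      intro j
      rw [hℓdef]
      simp [EuclideanSpace.inner_single_right]
    have hfd : ∀ j : Fin 3, fderiv ℝ f x (EuclideanSpace.single j 1)
        = (k j : ℝ) • (g' (ℓ x) • φ₀) := by
      intro j
      rw [hfderiv]
      simp [hsingle j]
    have hD : diracOp f x = (-I * g' (ℓ x)) • φ₀ := by
      rw [diracOp]
      have hsum : ∀ j : Fin 3, mulVecE (diracAlpha j) (fderiv ℝ f x (EuclideanSpace.single j 1))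
          = g' (ℓ x) • ((k j : ℂ) • mulVecE (diracAlpha j) φ₀) := by
        intro j
        rw [hfd j, mulVecE_real_smul_right, mulVecE_smul_right, ← Complex.coe_smul,
          smul_comm]
      rw [Finset.sum_congr rfl fun j _ => hsum j, ← Finset.smul_sum]
      have h5 : (∑ j : Fin 3, (k j : ℂ) • mulVecE (diracAlpha j) φ₀)
          = mulVecE (alphaDot k) φ₀ := by
        rw [alphaDot, mulVecE_sum_left]
        exact Finset.sum_congr rfl fun j _ => (mulVecE_smul_left _ _ _).symm
      rw [h5, hφk, smul_smul]
    have hqx : (q x : ℂ) = (η (ℓ x) : ℂ) := by rw [hq x, hℓ x]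
    rw [hD, hqx, hfx x, smul_smul, smul_smul, ← add_smul]
    congr 1
    rw [hg'def]
    linear_combination (-((lam : ℂ) - (η (ℓ x) : ℂ)) * g (ℓ x)) * Complex.I_mul_I
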